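/- Let d and d' be real numbers with d > 0, d' ≥ 0 and d + d' < 1, and let X and g be analytic functions on D_{1−d'} with finite weighted Fourier norms ‖X‖_{1−d'} and ‖g‖_{1−d'}. Then for every integer j ≥ 1 one has (1/j!) ‖L_X^j g‖_{1−d−d'} ≤ (1/e²) (2e/(ρσ))^j d^{−2j} ‖X‖_{1−d'}^j ‖g‖_{1−d'}, where L_X g = {g, X} is the Lie derivative and L_X^j its j-th iterate. -/

import Mathlib

open scoped BigOperators ENNReal
open Real

namespace KAMStmt

variable {n : ℕ}

/-- ℓ¹ norm of an integer vector `k`. -/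
def znorm (k : Fin n → ℤ) : ℕ := ∑ j, (k j).natAbs

/-- Complex polydisc of radius `ρ` around a center `c`. -/
def polydisc (ρ : ℝ) (c : Fin n → ℂ) : Set (Fin n → ℂ) :=
  {z | ∀ j, ‖z j - c j‖ < ρ}

/-- Complex extension `G_ρ` of a real set `G ⊆ ℝⁿ`. -/
def Gext (G : Set (Fin n → ℝ)) (ρ : ℝ) : Set (Fin n → ℂ) :=
  ⋃ p ∈ G, polydisc ρ (fun j => (p j : ℂ))

/-- Complex extension `Tⁿ_σ` of the torus. -/
def torusExt (n : ℕ) (σ : ℝ) : Set (Fin n → ℂ) :=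
  {q | ∀ j, |(q j).im| < σ}

/-- `k·q` with `k ∈ ℤⁿ`, `q ∈ ℂⁿ`. -/
noncomputable def zdotC (k : Fin n → ℤ) (q : Fin n → ℂ) : ℂ := ∑ j, (k j : ℂ) * q j

/-- `k·ω` with `k ∈ ℤⁿ`, `ω ∈ ℝⁿ`. -/
def zdotR (k : Fin n → ℤ) (ω : Fin n → ℝ) : ℝ := ∑ j, (k j : ℝ) * ω j

/-- Diophantine condition `|k·ω| > γ |k|^{-τ}` for all `k ≠ 0`. -/
def Diophantine (ω : Fin n → ℝ) (γ τ : ℝ) : Prop :=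
  ∀ k : Fin n → ℤ, k ≠ 0 → γ * (znorm k : ℝ) ^ (-τ) < |zdotR k ω|

/-- Families of Fourier coefficients `f_k(p)` of a function `f(p,q) = Σ_k f_k(p) e^{i k·q}`. -/
abbrev Coeffs (n : ℕ) := (Fin n → ℤ) → (Fin n → ℂ) → ℂ

/-- sup of `‖g‖` over a set, in `ℝ≥0∞`. -/
noncomputable def supE (S : Set (Fin n → ℂ)) (g : (Fin n → ℂ) → ℂ) : ℝ≥0∞ :=
  ⨆ p ∈ S, (‖g p‖₊ : ℝ≥0∞)

/-- weighted Fourier norm `‖f‖_{ρ,σ} = Σ_k |f_k|_ρ e^{|k|σ}` (sup over `G_ρ`). -/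
noncomputable def wnorm (G : Set (Fin n → ℝ)) (F : Coeffs n) (ρ σ : ℝ) : ℝ≥0∞ :=
  ∑' k : Fin n → ℤ, supE (Gext G ρ) (F k) * ENNReal.ofReal (Real.exp ((znorm k : ℝ) * σ))

/-- partial derivative `∂g/∂p_j`. -/
noncomputable def pder (j : Fin n) (g : (Fin n → ℂ) → ℂ) : (Fin n → ℂ) → ℂ :=
  fun p => fderiv ℂ g p (Pi.single j 1)

/-- Fourier coefficients of the Poisson bracket
`{f,g} = Σ_j (∂f/∂p_j ∂g/∂q_j − ∂f/∂q_j ∂g/∂p_j)`. -/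
noncomputable def pbC (F Gc : Coeffs n) : Coeffs n := fun k p =>
  ∑' k₁ : Fin n → ℤ, ∑ j,
    (pder j (F k₁) p * (Complex.I * ((k j - k₁ j : ℤ) : ℂ)) * Gc (k - k₁) p
      - Complex.I * ((k₁ j : ℤ) : ℂ) * F k₁ p * pder j (Gc (k - k₁)) p)

/-- Lie derivative `L_X g = {g, X}` at the level of Fourier coefficients. -/
noncomputable def lieC (X g : Coeffs n) : Coeffs n := pbC g X

/-- iterated Lie derivative `L_X^s`. -/
noncomputable def lieIter (X : Coeffs n) (s : ℕ) (g : Coeffs n) : Coeffs n := (lieC X)^[s] g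

/-- the class `P_l`: homogeneous of degree `l` in the actions `p`. -/
def InP (l : ℕ) (F : Coeffs n) : Prop :=
  ∀ (k : Fin n → ℤ) (t : ℂ) (p : Fin n → ℂ), F k (t • p) = t ^ l * F k p

/-- standard symplectic form on `ℂⁿ × ℂⁿ`. -/
noncomputable def sympForm (u v : (Fin n → ℂ) × (Fin n → ℂ)) : ℂ :=
  ∑ j, (u.1 j * v.2 j - u.2 j * v.1 j)

/-- canonical (holomorphic symplectic) map on a domain `D`. -/
def IsCanonicalOn (D : Set ((Fin n → ℂ) × (Fin n → ℂ)))
    (C : (Fin n → ℂ) × (Fin n → ℂ) → (Fin n → ℂ) × (Fin n → ℂ)) : Prop :=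
  DifferentiableOn ℂ C D ∧
  ∀ z ∈ D, ∀ u v, sympForm (fderiv ℂ C z u) (fderiv ℂ C z v) = sympForm u v


-- Section 1 : geometry
lemma isOpen_polydisc (r : ℝ) (c : Fin n → ℂ) : IsOpen (polydisc r c) := by
  have h : polydisc r c = ⋂ j, {z : Fin n → ℂ | ‖z j - c j‖ < r} := by
    ext z; simp [polydisc, Set.mem_iInter]
  rw [h]
  exact isOpen_iInter_of_finite fun j =>
    isOpen_lt (((continuous_apply j).sub continuous_const).norm) continuous_const

lemma polydisc_mono {r r' : ℝ} (h : r ≤ r') (c : Fin n → ℂ) :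
    polydisc r c ⊆ polydisc r' c := fun z hz j => lt_of_lt_of_le (hz j) h

lemma isOpen_Gext (G : Set (Fin n → ℝ)) (r : ℝ) : IsOpen (Gext G r) :=
  isOpen_biUnion fun _ _ => isOpen_polydisc _ _

lemma Gext_mono (G : Set (Fin n → ℝ)) {r r' : ℝ} (h : r ≤ r') :
    Gext G r ⊆ Gext G r' :=
  Set.iUnion₂_mono fun _ _ => polydisc_mono h _

lemma polydisc_subset_Gext {G : Set (Fin n → ℝ)} {p : Fin n → ℝ} (hp : p ∈ G) (r : ℝ) :
    polydisc r (fun j => (p j : ℂ)) ⊆ Gext G r :=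
  fun z hz => Set.mem_biUnion hp hz

lemma add_smul_mem_polydisc {r r' : ℝ} {c z v : Fin n → ℂ} (hz : z ∈ polydisc r' c)
    (hv : ‖v‖ ≤ 1) {t : ℂ} (ht : ‖t‖ < r - r') : z + t • v ∈ polydisc r c := by
  intro j
  have h1 : ‖v j‖ ≤ 1 := le_trans (norm_le_pi_norm v j) hv
  have h2 : ‖t * v j‖ ≤ ‖t‖ := by
    rw [norm_mul]
    exact mul_le_of_le_one_right (norm_nonneg t) h1
  calc ‖(z + t • v) j - c j‖ = ‖(z j - c j) + t * v j‖ := by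
        congr 1; simp only [Pi.add_apply, Pi.smul_apply, smul_eq_mul]; ring
  _ ≤ ‖z j - c j‖ + ‖t * v j‖ := norm_add_le _ _
  _ < r' + (r - r') := by
      have := hz j
      have := lt_of_le_of_lt h2 ht
      linarith
  _ = r := by ring

-- Section 2 : Cauchy estimate
lemma cauchy_dir {E : Type} [NormedAddCommGroup E] [NormedSpace ℂ E] [CompleteSpace E]
    {U : Set (Fin n → ℂ)} (hU : IsOpen U) {f : (Fin n → ℂ) → E}
    (hf : DifferentiableOn ℂ f U) {C : ℝ} (hC : ∀ w ∈ U, ‖f w‖ ≤ C)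
    {z v : Fin n → ℂ} (hv : ‖v‖ ≤ 1) {gap : ℝ} (hgap : 0 < gap)
    (hincl : ∀ t : ℂ, ‖t‖ < gap → z + t • v ∈ U) :
    ‖fderiv ℂ f z v‖ ≤ C / gap := by
  have hz : z ∈ U := by simpa using hincl 0 (by simpa using hgap)
  set φ : ℂ → E := fun t => f (z + t • v) with hφ
  have hmem : ∀ t : ℂ, t ∈ Metric.ball (0 : ℂ) gap → z + t • v ∈ U := by
    intro t ht
    exact hincl t (by simpa using mem_ball_zero_iff.1 ht)
  have hφdiff : ∀ t ∈ Metric.ball (0 : ℂ) gap, DifferentiableAt ℂ φ t := by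
    intro t ht
    have h1 : DifferentiableAt ℂ (fun s : ℂ => z + s • v) t :=
      (differentiableAt_const z).add (differentiableAt_id.smul_const v)
    exact (hf.differentiableAt (hU.mem_nhds (hmem t ht))).comp t h1
  have hder : HasDerivAt φ (fderiv ℂ f z v) 0 := by
    have h1 : HasDerivAt (fun s : ℂ => z + s • v) v 0 := by
      simpa using ((hasDerivAt_id (0 : ℂ)).smul_const v).const_add z
    have h2 : HasFDerivAt f (fderiv ℂ f z) z :=
      (hf.differentiableAt (hU.mem_nhds hz)).hasFDerivAt
    have h2' : HasFDerivAt f (fderiv ℂ f z) ((fun s : ℂ => z + s • v) 0) := by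
      simpa using h2
    exact h2'.comp_hasDerivAt 0 h1
  have hC0 : 0 ≤ C := le_trans (norm_nonneg _) (hC z hz)
  have key : ∀ r : ℝ, 0 < r → r < gap → ‖fderiv ℂ f z v‖ ≤ C / r := by
    intro r hr hrg
    have hball : Metric.ball (0 : ℂ) r ⊆ Metric.ball (0 : ℂ) gap :=
      Metric.ball_subset_ball hrg.le
    have hcl : closure (Metric.ball (0 : ℂ) r) ⊆ Metric.ball (0 : ℂ) gap := by
      rw [closure_ball (0 : ℂ) hr.ne']
      exact Metric.closedBall_subset_ball hrg
    have hdc : DiffContOnCl ℂ φ (Metric.ball (0 : ℂ) r) := by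
      constructor
      · exact fun t ht => (hφdiff t (hball ht)).differentiableWithinAt
      · exact fun t ht =>
          ((hφdiff t (hcl ht)).continuousAt).continuousWithinAt
    have hsb : ∀ t ∈ Metric.sphere (0 : ℂ) r, ‖φ t‖ ≤ C := by
      intro t ht
      have : ‖t‖ < gap := by
        have : ‖t‖ = r := by simpa using ht
        linarith
      exact hC _ (hincl t this)
    have := Complex.norm_deriv_le_of_forall_mem_sphere_norm_le hr hdc hsb
    rwa [hder.deriv] at this
  have hlim : Filter.Tendsto (fun r : ℝ => C / r) (nhdsWithin gap (Set.Iio gap))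
      (nhds (C / gap)) := by
    apply Filter.Tendsto.mono_left _ nhdsWithin_le_nhds
    exact (continuousAt_const.div continuousAt_id hgap.ne').tendsto
  have hev : ∀ᶠ r in nhdsWithin gap (Set.Iio gap), ‖fderiv ℂ f z v‖ ≤ C / r := by
    have hmem : gap ∈ Set.Ioc (gap / 2) gap := ⟨by linarith, le_rfl⟩
    filter_upwards [Ioo_mem_nhdsLT_of_mem hmem] with r hr
    exact key r (by linarith [hr.1]) hr.2
  exact ge_of_tendsto hlim hev


-- Section 3 : supE basics
lemma le_supE {S : Set (Fin n → ℂ)} {g : (Fin n → ℂ) → ℂ} {p : Fin n → ℂ} (hp : p ∈ S) :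
    (‖g p‖₊ : ℝ≥0∞) ≤ supE S g :=
  le_iSup₂ (f := fun q (_ : q ∈ S) => (‖g q‖₊ : ℝ≥0∞)) p hp

lemma supE_le {S : Set (Fin n → ℂ)} {g : (Fin n → ℂ) → ℂ} {C : ℝ≥0∞}
    (h : ∀ p ∈ S, (‖g p‖₊ : ℝ≥0∞) ≤ C) : supE S g ≤ C := iSup₂_le h

lemma supE_mono {S T : Set (Fin n → ℂ)} (h : S ⊆ T) (g : (Fin n → ℂ) → ℂ) :
    supE S g ≤ supE T g := supE_le fun p hp => le_supE (h hp)

lemma norm_le_supE_toReal {S : Set (Fin n → ℂ)} {g : (Fin n → ℂ) → ℂ}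
    (h : supE S g ≠ ⊤) {p : Fin n → ℂ} (hp : p ∈ S) : ‖g p‖ ≤ (supE S g).toReal := by
  have h1 := ENNReal.toReal_mono h (le_supE (g := g) hp)
  simpa using h1

-- Section 4 : enorm of tsum
lemma enorm_tsum_le {E : Type} [NormedAddCommGroup E] [CompleteSpace E] {ι : Type*}
    (f : ι → E) : (‖∑' i, f i‖₊ : ℝ≥0∞) ≤ ∑' i, (‖f i‖₊ : ℝ≥0∞) := by
  by_cases h : Summable (fun i => ‖f i‖₊)
  · rw [← ENNReal.coe_tsum h]
    exact_mod_cast nnnorm_tsum_le h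
  · have htop : (∑' i, (‖f i‖₊ : ℝ≥0∞)) = ⊤ := by
      by_contra hne
      exact h (ENNReal.tsum_coe_ne_top_iff_summable.1 hne)
    simp [htop]

lemma enorm_sum_le {E : Type} [NormedAddCommGroup E] {ι : Type*} (s : Finset ι)
    (f : ι → E) : (‖∑ i ∈ s, f i‖₊ : ℝ≥0∞) ≤ ∑ i ∈ s, (‖f i‖₊ : ℝ≥0∞) := by
  rw [← ENNReal.coe_finset_sum]
  exact_mod_cast nnnorm_sum_le s f

-- Section 5 : weights
noncomputable def ew (k : Fin n → ℤ) (s : ℝ) : ℝ≥0∞ :=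
  ENNReal.ofReal (Real.exp ((znorm k : ℝ) * s))

lemma wnorm_eq (G : Set (Fin n → ℝ)) (F : Coeffs n) (r s : ℝ) :
    wnorm G F r s = ∑' k, supE (Gext G r) (F k) * ew k s := rfl

lemma one_le_ew {k : Fin n → ℤ} {s : ℝ} (hs : 0 ≤ s) : 1 ≤ ew k s := by
  rw [ew, ← ENNReal.ofReal_one]
  exact ENNReal.ofReal_le_ofReal (by
    rw [← Real.exp_zero]
    exact Real.exp_le_exp.2 (by positivity))

lemma ew_mono {k : Fin n → ℤ} {s s' : ℝ} (h : s ≤ s') : ew k s ≤ ew k s' :=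
  ENNReal.ofReal_le_ofReal (Real.exp_le_exp.2 (mul_le_mul_of_nonneg_left h (Nat.cast_nonneg _)))

lemma znorm_add_le (k₁ k₂ : Fin n → ℤ) : znorm (k₁ + k₂) ≤ znorm k₁ + znorm k₂ := by
  unfold znorm
  rw [← Finset.sum_add_distrib]
  exact Finset.sum_le_sum fun j _ => by
    simpa [Pi.add_apply] using Int.natAbs_add_le (k₁ j) (k₂ j)

lemma ew_add_le {k₁ k₂ : Fin n → ℤ} {s : ℝ} (hs : 0 ≤ s) :
    ew (k₁ + k₂) s ≤ ew k₁ s * ew k₂ s := by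
  rw [ew, ew, ew, ← ENNReal.ofReal_mul (Real.exp_nonneg _), ← Real.exp_add]
  apply ENNReal.ofReal_le_ofReal
  apply Real.exp_le_exp.2
  rw [← add_mul]
  apply mul_le_mul_of_nonneg_right _ hs
  exact_mod_cast znorm_add_le k₁ k₂

lemma real_weight_decay {m s t : ℝ} (hm : 0 ≤ m) (ht : 0 < t) :
    m * Real.exp (m * s) ≤ (1 / (Real.exp 1 * t)) * Real.exp (m * (s + t)) := by
  have h1 : m * t ≤ Real.exp (m * t) / Real.exp 1 := by
    rw [← Real.exp_sub]
    calc m * t = (m * t - 1) + 1 := by ring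
    _ ≤ Real.exp (m * t - 1) := Real.add_one_le_exp _
  have h3 : m ≤ Real.exp (m * t) / (Real.exp 1 * t) := by
    rw [le_div_iff₀ (by positivity)]
    calc m * (Real.exp 1 * t) = (m * t) * Real.exp 1 := by ring
    _ ≤ (Real.exp (m * t) / Real.exp 1) * Real.exp 1 :=
        mul_le_mul_of_nonneg_right h1 (Real.exp_nonneg 1)
    _ = Real.exp (m * t) := div_mul_cancel₀ _ (Real.exp_ne_zero 1)
  calc m * Real.exp (m * s) ≤ (Real.exp (m * t) / (Real.exp 1 * t)) * Real.exp (m * s) :=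
        mul_le_mul_of_nonneg_right h3 (Real.exp_nonneg _)
  _ = (1 / (Real.exp 1 * t)) * Real.exp (m * (s + t)) := by
      rw [mul_add, Real.exp_add]; ring

lemma znorm_mul_ew_le {k : Fin n → ℤ} {s t : ℝ} (ht : 0 < t) :
    (znorm k : ℝ≥0∞) * ew k s ≤ ENNReal.ofReal (1 / (Real.exp 1 * t)) * ew k (s + t) := by
  rw [ew, ew, ← ENNReal.ofReal_natCast (znorm k),
    ← ENNReal.ofReal_mul (Nat.cast_nonneg _), ← ENNReal.ofReal_mul (by positivity)]
  exact ENNReal.ofReal_le_ofReal (real_weight_decay (Nat.cast_nonneg _) ht)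

-- Section 6 : pder bound and wnorm lemmas
lemma pder_supE_bound {G : Set (Fin n → ℝ)} {r₂ r₁ : ℝ} (h : r₂ < r₁)
    {f : (Fin n → ℂ) → ℂ} (hf : DifferentiableOn ℂ f (Gext G r₁))
    {z : Fin n → ℂ} (hz : z ∈ Gext G r₂) {v : Fin n → ℂ} (hv : ‖v‖ ≤ 1) :
    (‖fderiv ℂ f z v‖₊ : ℝ≥0∞) ≤ supE (Gext G r₁) f * ENNReal.ofReal (1 / (r₁ - r₂)) := by
  by_cases hM : supE (Gext G r₁) f = ⊤
  · rw [hM, ENNReal.top_mul (ENNReal.ofReal_pos.2 (by have := sub_pos.2 h; positivity : (0:ℝ) < 1 / (r₁ - r₂))).ne']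
    exact le_top
  · have hC : ∀ w ∈ Gext G r₁, ‖f w‖ ≤ (supE (Gext G r₁) f).toReal :=
      fun w hw => norm_le_supE_toReal hM hw
    obtain ⟨p, hp, hzp⟩ : ∃ p ∈ G, z ∈ polydisc r₂ (fun j => (p j : ℂ)) := by
      simpa [Gext, Set.mem_iUnion] using hz
    have hincl : ∀ t : ℂ, ‖t‖ < r₁ - r₂ → z + t • v ∈ Gext G r₁ := fun t ht =>
      polydisc_subset_Gext hp r₁ (add_smul_mem_polydisc hzp hv ht)
    have hb := cauchy_dir (isOpen_Gext G r₁) hf hC hv (by linarith) hincl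
    calc (‖fderiv ℂ f z v‖₊ : ℝ≥0∞)
        ≤ ENNReal.ofReal ((supE (Gext G r₁) f).toReal / (r₁ - r₂)) := by
          rw [← enorm_eq_nnnorm, ← ofReal_norm]
          exact ENNReal.ofReal_le_ofReal hb
    _ = supE (Gext G r₁) f * ENNReal.ofReal (1 / (r₁ - r₂)) := by
        rw [div_eq_mul_one_div, ENNReal.ofReal_mul ENNReal.toReal_nonneg,
          ENNReal.ofReal_toReal hM]

lemma wnorm_mono {G : Set (Fin n → ℝ)} {F : Coeffs n} {r s r' s' : ℝ}
    (hr : r ≤ r') (hs : s ≤ s') : wnorm G F r s ≤ wnorm G F r' s' :=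
  ENNReal.tsum_le_tsum fun k =>
    mul_le_mul' (supE_mono (Gext_mono G hr) _) (ew_mono hs)

lemma supE_mul_ew_le_wnorm {G : Set (Fin n → ℝ)} {F : Coeffs n} {r s : ℝ} (k : Fin n → ℤ) :
    supE (Gext G r) (F k) * ew k s ≤ wnorm G F r s := ENNReal.le_tsum k

lemma supE_le_wnorm {G : Set (Fin n → ℝ)} {F : Coeffs n} {r s : ℝ} (hs : 0 ≤ s)
    (k : Fin n → ℤ) : supE (Gext G r) (F k) ≤ wnorm G F r s := by
  calc supE (Gext G r) (F k) = supE (Gext G r) (F k) * 1 := (mul_one _).symm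
  _ ≤ supE (Gext G r) (F k) * ew k s := mul_le_mul' le_rfl (one_le_ew hs)
  _ ≤ wnorm G F r s := supE_mul_ew_le_wnorm k

lemma znorm_mul_supE_le_wnorm {G : Set (Fin n → ℝ)} {F : Coeffs n} {r s : ℝ} (hs : 0 < s)
    (k : Fin n → ℤ) : (znorm k : ℝ≥0∞) * supE (Gext G r) (F k) ≤
      ENNReal.ofReal (1 / (Real.exp 1 * s)) * wnorm G F r s := by
  have h1 : (znorm k : ℝ≥0∞) * 1 ≤ ENNReal.ofReal (1 / (Real.exp 1 * s)) * ew k s := by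
    have := znorm_mul_ew_le (k := k) (s := 0) hs
    simpa [ew, mul_comm] using this
  calc (znorm k : ℝ≥0∞) * supE (Gext G r) (F k)
      ≤ (ENNReal.ofReal (1 / (Real.exp 1 * s)) * ew k s) * supE (Gext G r) (F k) := by
        rw [← mul_one (znorm k : ℝ≥0∞)] at *
        exact mul_le_mul' (by simpa using h1) le_rfl
  _ = ENNReal.ofReal (1 / (Real.exp 1 * s)) * (supE (Gext G r) (F k) * ew k s) := by ring
  _ ≤ ENNReal.ofReal (1 / (Real.exp 1 * s)) * wnorm G F r s :=
      mul_le_mul' le_rfl (supE_mul_ew_le_wnorm k)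


-- Section 7 : auxiliary norm identities
lemma enn_nnnorm_I_int (m : ℤ) : (‖Complex.I * (m : ℂ)‖₊ : ℝ≥0∞) = (m.natAbs : ℝ≥0∞) := by
  rw [← enorm_eq_nnnorm, ← ofReal_norm, ← ENNReal.ofReal_natCast]
  congr 1
  rw [norm_mul, Complex.norm_I, one_mul, Complex.norm_intCast, Nat.cast_natAbs, Int.cast_abs]

lemma enn_nnnorm_mul (u v : ℂ) : (‖u * v‖₊ : ℝ≥0∞) = (‖u‖₊ : ℝ≥0∞) * (‖v‖₊ : ℝ≥0∞) := by
  rw [nnnorm_mul, ENNReal.coe_mul]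

lemma tsum_prod_mul (f g : (Fin n → ℤ) → ℝ≥0∞) :
    ∑' q : (Fin n → ℤ) × (Fin n → ℤ), f q.1 * g q.2 = (∑' k, f k) * (∑' k, g k) := by
  rw [ENNReal.tsum_prod (f := fun a b => f a * g b)]
  simp only [ENNReal.tsum_mul_left, ENNReal.tsum_mul_right]

def pairEquiv (n : ℕ) : ((Fin n → ℤ) × (Fin n → ℤ)) ≃ ((Fin n → ℤ) × (Fin n → ℤ)) where
  toFun q := (q.1 + q.2, q.1)
  invFun p := (p.2, p.1 - p.2)
  left_inv q := by simp
  right_inv p := by simp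

-- pointwise term bound
lemma pbC_term_enorm_bound {G : Set (Fin n → ℝ)} {ρ : ℝ} {r rF rX : ℝ}
    (hρF : r * ρ < rF * ρ) (hρX : r * ρ < rX * ρ)
    {F X : Coeffs n}
    (hF : ∀ k, DifferentiableOn ℂ (F k) (Gext G (rF * ρ)))
    (hX : ∀ k, DifferentiableOn ℂ (X k) (Gext G (rX * ρ)))
    (k k₁ : Fin n → ℤ) {z : Fin n → ℂ} (hz : z ∈ Gext G (r * ρ)) :
    (‖∑ j, (pder j (F k₁) z * (Complex.I * ((k j - k₁ j : ℤ) : ℂ)) * X (k - k₁) z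
        - Complex.I * ((k₁ j : ℤ) : ℂ) * F k₁ z * pder j (X (k - k₁)) z)‖₊ : ℝ≥0∞)
    ≤ ((znorm (k - k₁) : ℝ≥0∞) * ENNReal.ofReal (1 / (rF * ρ - r * ρ))
        + (znorm k₁ : ℝ≥0∞) * ENNReal.ofReal (1 / (rX * ρ - r * ρ)))
      * (supE (Gext G (rF * ρ)) (F k₁) * supE (Gext G (rX * ρ)) (X (k - k₁))) := by
  set a : (Fin n → ℤ) → ℝ≥0∞ := fun k => supE (Gext G (rF * ρ)) (F k) with ha
  set x : (Fin n → ℤ) → ℝ≥0∞ := fun k => supE (Gext G (rX * ρ)) (X k) with hx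
  set κ₁ : ℝ≥0∞ := ENNReal.ofReal (1 / (rF * ρ - r * ρ)) with hκ₁
  set κ₂ : ℝ≥0∞ := ENNReal.ofReal (1 / (rX * ρ - r * ρ)) with hκ₂
  have hzF : z ∈ Gext G (rF * ρ) := Gext_mono G hρF.le hz
  have hzX : z ∈ Gext G (rX * ρ) := Gext_mono G hρX.le hz
  have hsingle : ∀ j : Fin n, ‖(Pi.single j (1:ℂ) : Fin n → ℂ)‖ ≤ 1 := by
    intro j; rw [Pi.norm_single, norm_one]
  calc (‖∑ j, (pder j (F k₁) z * (Complex.I * ((k j - k₁ j : ℤ) : ℂ)) * X (k - k₁) z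
        - Complex.I * ((k₁ j : ℤ) : ℂ) * F k₁ z * pder j (X (k - k₁)) z)‖₊ : ℝ≥0∞)
      ≤ ∑ j, ((‖pder j (F k₁) z * (Complex.I * ((k j - k₁ j : ℤ) : ℂ)) * X (k - k₁) z‖₊ : ℝ≥0∞)
        + (‖Complex.I * ((k₁ j : ℤ) : ℂ) * F k₁ z * pder j (X (k - k₁)) z‖₊ : ℝ≥0∞)) := by
        refine le_trans (enorm_sum_le _ _) (Finset.sum_le_sum fun j _ => ?_)
        rw [← ENNReal.coe_add]
        exact_mod_cast nnnorm_sub_le _ _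
  _ ≤ ∑ j, ((a k₁ * x (k - k₁)) * (κ₁ * (((k j - k₁ j).natAbs : ℝ≥0∞)))
        + (a k₁ * x (k - k₁)) * (κ₂ * (((k₁ j).natAbs : ℝ≥0∞)))) := by
      apply Finset.sum_le_sum
      intro j _
      have hpF : (‖pder j (F k₁) z‖₊ : ℝ≥0∞) ≤ a k₁ * κ₁ := by
        rw [hκ₁, ha]
        exact pder_supE_bound hρF (hF k₁) hz (hsingle j)
      have hpX : (‖pder j (X (k - k₁)) z‖₊ : ℝ≥0∞) ≤ x (k - k₁) * κ₂ := by
        rw [hκ₂, hx]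
        exact pder_supE_bound hρX (hX (k - k₁)) hz (hsingle j)
      have hXv : (‖X (k - k₁) z‖₊ : ℝ≥0∞) ≤ x (k - k₁) := le_supE hzX
      have hFv : (‖F k₁ z‖₊ : ℝ≥0∞) ≤ a k₁ := le_supE hzF
      have e1 : (‖pder j (F k₁) z * (Complex.I * ((k j - k₁ j : ℤ) : ℂ)) * X (k - k₁) z‖₊ : ℝ≥0∞)
          = (‖pder j (F k₁) z‖₊ : ℝ≥0∞) * (((k j - k₁ j).natAbs : ℝ≥0∞)) * (‖X (k - k₁) z‖₊ : ℝ≥0∞) := by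
        rw [enn_nnnorm_mul, enn_nnnorm_mul, enn_nnnorm_I_int]
      have e2 : (‖Complex.I * ((k₁ j : ℤ) : ℂ) * F k₁ z * pder j (X (k - k₁)) z‖₊ : ℝ≥0∞)
          = (((k₁ j).natAbs : ℝ≥0∞)) * (‖F k₁ z‖₊ : ℝ≥0∞) * (‖pder j (X (k - k₁)) z‖₊ : ℝ≥0∞) := by
        rw [enn_nnnorm_mul, enn_nnnorm_mul, enn_nnnorm_I_int]
      rw [e1, e2]
      apply add_le_add
      · calc (‖pder j (F k₁) z‖₊ : ℝ≥0∞) * (((k j - k₁ j).natAbs : ℝ≥0∞)) * (‖X (k - k₁) z‖₊ : ℝ≥0∞)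
            ≤ (a k₁ * κ₁) * (((k j - k₁ j).natAbs : ℝ≥0∞)) * x (k - k₁) := by
              exact mul_le_mul' (mul_le_mul' hpF le_rfl) hXv
        _ = (a k₁ * x (k - k₁)) * (κ₁ * (((k j - k₁ j).natAbs : ℝ≥0∞))) := by ring
      · calc (((k₁ j).natAbs : ℝ≥0∞)) * (‖F k₁ z‖₊ : ℝ≥0∞) * (‖pder j (X (k - k₁)) z‖₊ : ℝ≥0∞)
            ≤ (((k₁ j).natAbs : ℝ≥0∞)) * a k₁ * (x (k - k₁) * κ₂) := by
              exact mul_le_mul' (mul_le_mul' le_rfl hFv) hpX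
        _ = (a k₁ * x (k - k₁)) * (κ₂ * (((k₁ j).natAbs : ℝ≥0∞))) := by ring
  _ = ((znorm (k - k₁) : ℝ≥0∞) * κ₁ + (znorm k₁ : ℝ≥0∞) * κ₂) * (a k₁ * x (k - k₁)) := by
      rw [Finset.sum_add_distrib, ← Finset.mul_sum, ← Finset.mul_sum, ← Finset.mul_sum, ← Finset.mul_sum]
      have hz1 : ∑ j, (((k j - k₁ j).natAbs : ℝ≥0∞)) = (znorm (k - k₁) : ℝ≥0∞) := by
        rw [znorm, Nat.cast_sum]
        exact Finset.sum_congr rfl fun j _ => by simp [Pi.sub_apply]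
      have hz2 : ∑ j, (((k₁ j).natAbs : ℝ≥0∞)) = (znorm k₁ : ℝ≥0∞) := by
        rw [znorm, Nat.cast_sum]
      rw [hz1, hz2]
      ring

-- Section 8 : the one-step estimate
-- Section 8 : the one-step estimate
lemma pbC_wnorm_le {G : Set (Fin n → ℝ)} {ρ σ : ℝ} (hρ : 0 < ρ) (hσ : 0 < σ)
    {r rF rX : ℝ} (hr : 0 < r) (hrF : r < rF) (hFX : rF ≤ rX)
    {F X : Coeffs n}
    (hF : ∀ k, DifferentiableOn ℂ (F k) (Gext G (rF * ρ)))
    (hX : ∀ k, DifferentiableOn ℂ (X k) (Gext G (rX * ρ))) :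
    wnorm G (pbC F X) (r * ρ) (r * σ) ≤
      ENNReal.ofReal (2 / (Real.exp 1 * ρ * σ * ((rF - r) * (rX - r)))) *
        wnorm G F (rF * ρ) (rF * σ) * wnorm G X (rX * ρ) (rX * σ) := by
  have hrX : r < rX := lt_of_lt_of_le hrF hFX
  have hρF : r * ρ < rF * ρ := by nlinarith
  have hρX : r * ρ < rX * ρ := by nlinarith
  have hσF : r * σ ≤ rF * σ := by nlinarith
  have hσX : r * σ ≤ rX * σ := by nlinarith
  have hrσ : 0 ≤ r * σ := by positivity
  set a : (Fin n → ℤ) → ℝ≥0∞ := fun k => supE (Gext G (rF * ρ)) (F k) with ha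
  set x : (Fin n → ℤ) → ℝ≥0∞ := fun k => supE (Gext G (rX * ρ)) (X k) with hx
  set κ₁ : ℝ≥0∞ := ENNReal.ofReal (1 / (rF * ρ - r * ρ)) with hκ₁
  set κ₂ : ℝ≥0∞ := ENNReal.ofReal (1 / (rX * ρ - r * ρ)) with hκ₂
  set WF : ℝ≥0∞ := wnorm G F (rF * ρ) (rF * σ) with hWF
  set WX : ℝ≥0∞ := wnorm G X (rX * ρ) (rX * σ) with hWX
  -- Step A : pointwise coefficient bound
  have keyA : ∀ k, supE (Gext G (r * ρ)) (pbC F X k) ≤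
      ∑' k₁, ((znorm (k - k₁) : ℝ≥0∞) * κ₁ + (znorm k₁ : ℝ≥0∞) * κ₂) * (a k₁ * x (k - k₁)) := by
    intro k
    apply supE_le
    intro z hz
    refine le_trans (enorm_tsum_le _) (ENNReal.tsum_le_tsum fun k₁ => ?_)
    exact pbC_term_enorm_bound hρF hρX hF hX k k₁ hz
  -- Step B : summation over k
  have c2 : ℝ := 0
  calc wnorm G (pbC F X) (r * ρ) (r * σ)
      = ∑' k, supE (Gext G (r * ρ)) (pbC F X k) * ew k (r * σ) := rfl
  _ ≤ ∑' k, (∑' k₁, ((znorm (k - k₁) : ℝ≥0∞) * κ₁ + (znorm k₁ : ℝ≥0∞) * κ₂) * (a k₁ * x (k - k₁))) * ew k (r * σ) :=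
      ENNReal.tsum_le_tsum fun k => mul_le_mul' (keyA k) le_rfl
  _ = ∑' k, ∑' k₁, (((znorm (k - k₁) : ℝ≥0∞) * κ₁ + (znorm k₁ : ℝ≥0∞) * κ₂) * (a k₁ * x (k - k₁))) * ew k (r * σ) := by
      congr 1; funext k; rw [ENNReal.tsum_mul_right]
  _ = ∑' q : (Fin n → ℤ) × (Fin n → ℤ),
        (((znorm (q.1 - q.2) : ℝ≥0∞) * κ₁ + (znorm q.2 : ℝ≥0∞) * κ₂) * (a q.2 * x (q.1 - q.2))) * ew q.1 (r * σ) := by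
      rw [ENNReal.tsum_prod (f := fun k k₁ => (((znorm (k - k₁) : ℝ≥0∞) * κ₁ + (znorm k₁ : ℝ≥0∞) * κ₂) * (a k₁ * x (k - k₁))) * ew k (r * σ))]
  _ = ∑' q : (Fin n → ℤ) × (Fin n → ℤ),
        (((znorm q.2 : ℝ≥0∞) * κ₁ + (znorm q.1 : ℝ≥0∞) * κ₂) * (a q.1 * x q.2)) * ew (q.1 + q.2) (r * σ) := by
      rw [← Equiv.tsum_eq (pairEquiv n) (fun q =>
        (((znorm (q.1 - q.2) : ℝ≥0∞) * κ₁ + (znorm q.2 : ℝ≥0∞) * κ₂) * (a q.2 * x (q.1 - q.2))) * ew q.1 (r * σ))]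
      apply tsum_congr
      intro q
      simp [pairEquiv]
  _ ≤ ∑' q : (Fin n → ℤ) × (Fin n → ℤ),
        (κ₁ * (a q.1 * ew q.1 (r * σ)) * ((znorm q.2 : ℝ≥0∞) * x q.2 * ew q.2 (r * σ))
          + κ₂ * ((znorm q.1 : ℝ≥0∞) * a q.1 * ew q.1 (r * σ)) * (x q.2 * ew q.2 (r * σ))) := by
      apply ENNReal.tsum_le_tsum
      intro q
      calc (((znorm q.2 : ℝ≥0∞) * κ₁ + (znorm q.1 : ℝ≥0∞) * κ₂) * (a q.1 * x q.2)) * ew (q.1 + q.2) (r * σ)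
          ≤ (((znorm q.2 : ℝ≥0∞) * κ₁ + (znorm q.1 : ℝ≥0∞) * κ₂) * (a q.1 * x q.2)) * (ew q.1 (r * σ) * ew q.2 (r * σ)) :=
            mul_le_mul' le_rfl (ew_add_le hrσ)
      _ = κ₁ * (a q.1 * ew q.1 (r * σ)) * ((znorm q.2 : ℝ≥0∞) * x q.2 * ew q.2 (r * σ))
            + κ₂ * ((znorm q.1 : ℝ≥0∞) * a q.1 * ew q.1 (r * σ)) * (x q.2 * ew q.2 (r * σ)) := by ring
  _ = κ₁ * ((∑' k, a k * ew k (r * σ)) * (∑' k, (znorm k : ℝ≥0∞) * x k * ew k (r * σ)))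
        + κ₂ * ((∑' k, (znorm k : ℝ≥0∞) * a k * ew k (r * σ)) * (∑' k, x k * ew k (r * σ))) := by
      rw [ENNReal.tsum_add]
      congr 1
      · calc ∑' q : (Fin n → ℤ) × (Fin n → ℤ), κ₁ * (a q.1 * ew q.1 (r * σ)) * ((znorm q.2 : ℝ≥0∞) * x q.2 * ew q.2 (r * σ))
            = ∑' q : (Fin n → ℤ) × (Fin n → ℤ), κ₁ * ((fun k => a k * ew k (r * σ)) q.1 * (fun k => (znorm k : ℝ≥0∞) * x k * ew k (r * σ)) q.2) := by
              apply tsum_congr; intro q; simp only []; ring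
        _ = κ₁ * ∑' q : (Fin n → ℤ) × (Fin n → ℤ), (fun k => a k * ew k (r * σ)) q.1 * (fun k => (znorm k : ℝ≥0∞) * x k * ew k (r * σ)) q.2 := ENNReal.tsum_mul_left
        _ = κ₁ * ((∑' k, a k * ew k (r * σ)) * (∑' k, (znorm k : ℝ≥0∞) * x k * ew k (r * σ))) := by
              rw [tsum_prod_mul (fun k => a k * ew k (r * σ)) (fun k => (znorm k : ℝ≥0∞) * x k * ew k (r * σ))]
      · calc ∑' q : (Fin n → ℤ) × (Fin n → ℤ), κ₂ * ((znorm q.1 : ℝ≥0∞) * a q.1 * ew q.1 (r * σ)) * (x q.2 * ew q.2 (r * σ))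
            = ∑' q : (Fin n → ℤ) × (Fin n → ℤ), κ₂ * ((fun k => (znorm k : ℝ≥0∞) * a k * ew k (r * σ)) q.1 * (fun k => x k * ew k (r * σ)) q.2) := by
              apply tsum_congr; intro q; simp only []; ring
        _ = κ₂ * ∑' q : (Fin n → ℤ) × (Fin n → ℤ), (fun k => (znorm k : ℝ≥0∞) * a k * ew k (r * σ)) q.1 * (fun k => x k * ew k (r * σ)) q.2 := ENNReal.tsum_mul_left
        _ = κ₂ * ((∑' k, (znorm k : ℝ≥0∞) * a k * ew k (r * σ)) * (∑' k, x k * ew k (r * σ))) := by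
              rw [tsum_prod_mul (fun k => (znorm k : ℝ≥0∞) * a k * ew k (r * σ)) (fun k => x k * ew k (r * σ))]
  _ ≤ κ₁ * (WF * (ENNReal.ofReal (1 / (Real.exp 1 * ((rX - r) * σ))) * WX))
        + κ₂ * ((ENNReal.ofReal (1 / (Real.exp 1 * ((rF - r) * σ))) * WF) * WX) := by
      have hS1 : (∑' k, a k * ew k (r * σ)) ≤ WF := by
        refine le_trans (ENNReal.tsum_le_tsum fun k => mul_le_mul' le_rfl (ew_mono hσF)) ?_
        rw [hWF, wnorm_eq]
      have hS4 : (∑' k, x k * ew k (r * σ)) ≤ WX := by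
        refine le_trans (ENNReal.tsum_le_tsum fun k => mul_le_mul' le_rfl (ew_mono hσX)) ?_
        rw [hWX, wnorm_eq]
      have hS2 : (∑' k, (znorm k : ℝ≥0∞) * x k * ew k (r * σ)) ≤
          ENNReal.ofReal (1 / (Real.exp 1 * ((rX - r) * σ))) * WX := by
        have hper : ∀ k, (znorm k : ℝ≥0∞) * x k * ew k (r * σ) ≤
            ENNReal.ofReal (1 / (Real.exp 1 * ((rX - r) * σ))) * (x k * ew k (rX * σ)) := by
          intro k
          have hd := znorm_mul_ew_le (k := k) (s := r * σ) (t := (rX - r) * σ)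
            (by have : 0 < rX - r := sub_pos.2 hrX; positivity)
          have he : ew k (r * σ + (rX - r) * σ) = ew k (rX * σ) := by
            congr 1; ring
          rw [he] at hd
          calc (znorm k : ℝ≥0∞) * x k * ew k (r * σ)
              = ((znorm k : ℝ≥0∞) * ew k (r * σ)) * x k := by ring
          _ ≤ (ENNReal.ofReal (1 / (Real.exp 1 * ((rX - r) * σ))) * ew k (rX * σ)) * x k :=
              mul_le_mul' hd le_rfl
          _ = ENNReal.ofReal (1 / (Real.exp 1 * ((rX - r) * σ))) * (x k * ew k (rX * σ)) := by ring
        refine le_trans (ENNReal.tsum_le_tsum hper) ?_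
        rw [ENNReal.tsum_mul_left]
        exact mul_le_mul' le_rfl (le_of_eq (by rw [hWX, wnorm_eq]))
      have hS3 : (∑' k, (znorm k : ℝ≥0∞) * a k * ew k (r * σ)) ≤
          ENNReal.ofReal (1 / (Real.exp 1 * ((rF - r) * σ))) * WF := by
        have hper : ∀ k, (znorm k : ℝ≥0∞) * a k * ew k (r * σ) ≤
            ENNReal.ofReal (1 / (Real.exp 1 * ((rF - r) * σ))) * (a k * ew k (rF * σ)) := by
          intro k
          have hd := znorm_mul_ew_le (k := k) (s := r * σ) (t := (rF - r) * σ)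
            (by have : 0 < rF - r := sub_pos.2 hrF; positivity)
          have he : ew k (r * σ + (rF - r) * σ) = ew k (rF * σ) := by
            congr 1; ring
          rw [he] at hd
          calc (znorm k : ℝ≥0∞) * a k * ew k (r * σ)
              = ((znorm k : ℝ≥0∞) * ew k (r * σ)) * a k := by ring
          _ ≤ (ENNReal.ofReal (1 / (Real.exp 1 * ((rF - r) * σ))) * ew k (rF * σ)) * a k :=
              mul_le_mul' hd le_rfl
          _ = ENNReal.ofReal (1 / (Real.exp 1 * ((rF - r) * σ))) * (a k * ew k (rF * σ)) := by ring
        refine le_trans (ENNReal.tsum_le_tsum hper) ?_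
        rw [ENNReal.tsum_mul_left]
        exact mul_le_mul' le_rfl (le_of_eq (by rw [hWF, wnorm_eq]))
      exact add_le_add (mul_le_mul' le_rfl (mul_le_mul' hS1 hS2))
        (mul_le_mul' le_rfl (mul_le_mul' hS3 hS4))
  _ = (κ₁ * ENNReal.ofReal (1 / (Real.exp 1 * ((rX - r) * σ)))
        + κ₂ * ENNReal.ofReal (1 / (Real.exp 1 * ((rF - r) * σ)))) * WF * WX := by ring
  _ = ENNReal.ofReal (2 / (Real.exp 1 * ρ * σ * ((rF - r) * (rX - r)))) * WF * WX := by
      congr 2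
      have h1 : rF * ρ - r * ρ = (rF - r) * ρ := by ring
      have h2 : rX * ρ - r * ρ = (rX - r) * ρ := by ring
      have hF0 : (0:ℝ) < rF - r := sub_pos.2 hrF
      have hX0 : (0:ℝ) < rX - r := sub_pos.2 hrX
      have hee : (0:ℝ) < Real.exp 1 := Real.exp_pos 1
      have hp1 : (0:ℝ) ≤ 1 / (rF * ρ - r * ρ) := by rw [h1]; positivity
      have hp2 : (0:ℝ) ≤ 1 / (rX * ρ - r * ρ) := by rw [h2]; positivity
      have hq1 : (0:ℝ) ≤ 1 / (rF * ρ - r * ρ) * (1 / (Real.exp 1 * ((rX - r) * σ))) := by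
        apply mul_nonneg hp1; positivity
      have hq2 : (0:ℝ) ≤ 1 / (rX * ρ - r * ρ) * (1 / (Real.exp 1 * ((rF - r) * σ))) := by
        apply mul_nonneg hp2; positivity
      rw [hκ₁, hκ₂, ← ENNReal.ofReal_mul hp1, ← ENNReal.ofReal_mul hp2,
        ← ENNReal.ofReal_add hq1 hq2]
      congr 1
      rw [h1, h2]
      field_simp
      ring


-- Section 9 : operator norm Cauchy bound
lemma cauchy_opnorm {E : Type} [NormedAddCommGroup E] [NormedSpace ℂ E] [CompleteSpace E]
    {U : Set (Fin n → ℂ)} (hU : IsOpen U) {f : (Fin n → ℂ) → E}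
    (hf : DifferentiableOn ℂ f U) {C : ℝ} (hC : ∀ w ∈ U, ‖f w‖ ≤ C)
    {z : Fin n → ℂ} {gap : ℝ} (hgap : 0 < gap)
    (hincl : ∀ v : Fin n → ℂ, ‖v‖ ≤ 1 → ∀ t : ℂ, ‖t‖ < gap → z + t • v ∈ U) :
    ‖fderiv ℂ f z‖ ≤ C / gap := by
  have hz : z ∈ U := by
    have := hincl 0 (by simp) 0 (by simpa using hgap)
    simpa using this
  have hC0 : 0 ≤ C := le_trans (norm_nonneg _) (hC z hz)
  apply ContinuousLinearMap.opNorm_le_bound _ (div_nonneg hC0 hgap.le)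
  intro v
  rcases eq_or_ne v 0 with rfl | hv0
  · simp
  · have hvn : (0:ℝ) < ‖v‖ := norm_pos_iff.2 hv0
    set u : Fin n → ℂ := ((‖v‖ : ℂ))⁻¹ • v with hu
    have hun : ‖u‖ ≤ 1 := by
      rw [hu, norm_smul, norm_inv, Complex.norm_real, norm_norm, inv_mul_cancel₀ hvn.ne']
    have hb := cauchy_dir hU hf hC hun hgap (hincl u hun)
    have hvu : fderiv ℂ f z v = (‖v‖ : ℂ) • fderiv ℂ f z u := by
      rw [hu, map_smul]
      rw [smul_smul, mul_inv_cancel₀ (by exact_mod_cast hvn.ne' : ((‖v‖:ℝ):ℂ) ≠ 0), one_smul]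
    rw [hvu, norm_smul, Complex.norm_real, norm_norm, mul_comm]
    exact mul_le_mul hb le_rfl (norm_nonneg v) (div_nonneg hC0 hgap.le)

lemma fderiv_opnorm_bound_polydisc {E : Type} [NormedAddCommGroup E] [NormedSpace ℂ E]
    [CompleteSpace E] {c : Fin n → ℂ} {Rb R' : ℝ} (hRR : R' < Rb)
    {f : (Fin n → ℂ) → E} (hdiff : DifferentiableOn ℂ f (polydisc Rb c))
    {C : ℝ} (hC : ∀ w ∈ polydisc Rb c, ‖f w‖ ≤ C)
    {z : Fin n → ℂ} (hz : z ∈ polydisc R' c) :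
    ‖fderiv ℂ f z‖ ≤ C / (Rb - R') :=
  cauchy_opnorm (isOpen_polydisc Rb c) hdiff hC (by linarith)
    (fun v hv t ht => add_smul_mem_polydisc hz hv ht)

-- Section 10 : differentiating series on polydiscs
lemma hasFDerivAt_tsum_polydisc {E : Type} [NormedAddCommGroup E] [NormedSpace ℂ E]
    [CompleteSpace E] {ι : Type} {t : ι → (Fin n → ℂ) → E} {c : Fin n → ℂ} {Rb R' : ℝ}
    {b : ι → ℝ} (hRR : R' < Rb)
    (hdiff : ∀ i, DifferentiableOn ℂ (t i) (polydisc Rb c))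
    (hb : Summable b)
    (hbd : ∀ i, ∀ z ∈ polydisc Rb c, ‖t i z‖ ≤ b i)
    {z : Fin n → ℂ} (hz : z ∈ polydisc R' c) :
    HasFDerivAt (fun w => ∑' i, t i w) (∑' i, fderiv ℂ (t i) z) z := by
  have hsub : polydisc R' c ⊆ polydisc Rb c := polydisc_mono hRR.le c
  have hbd' : ∀ i, ∀ w ∈ polydisc R' c, ‖fderiv ℂ (t i) w‖ ≤ b i / (Rb - R') :=
    fun i w hw => fderiv_opnorm_bound_polydisc hRR (hdiff i) (hbd i) hw
  apply hasFDerivAt_of_tendstoUniformlyOn (isOpen_polydisc R' c)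
    (tendstoUniformlyOn_tsum (hb.div_const (Rb - R')) hbd')
    (fun N w hw => HasFDerivAt.sum
      (fun i _ => ((hdiff i).differentiableAt
        ((isOpen_polydisc Rb c).mem_nhds (hsub hw))).hasFDerivAt))
    (fun w hw => by simp only [Finset.sum_apply]; exact (Summable.of_norm_bounded hb (fun i => hbd i w (hsub hw))).hasSum)
    hz

lemma contDiffOn_nat_tsum_polydisc (m : ℕ) :
    ∀ {E : Type} [NormedAddCommGroup E] [NormedSpace ℂ E] [CompleteSpace E]
      {ι : Type} {t : ι → (Fin n → ℂ) → E} {c : Fin n → ℂ} {Rb R' : ℝ} {b : ι → ℝ},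
      R' < Rb →
      (∀ i, ContDiffOn ℂ (((⊤:ℕ∞)) : WithTop ℕ∞) (t i) (polydisc Rb c)) →
      Summable b →
      (∀ i, ∀ z ∈ polydisc Rb c, ‖t i z‖ ≤ b i) →
      ContDiffOn ℂ ((m : ℕ∞) : WithTop ℕ∞) (fun w => ∑' i, t i w) (polydisc R' c) := by
  induction m with
  | zero =>
    intro E _ _ _ ι t c Rb R' b hRR hsm hb hbd
    have h0 : ((0:ℕ∞) : WithTop ℕ∞) = 0 := rfl
    simp only [Nat.cast_zero, h0, contDiffOn_zero]
    apply TendstoUniformlyOn.continuousOn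
      (tendstoUniformlyOn_tsum hb (fun i w hw => hbd i w (polydisc_mono hRR.le c hw)))
    refine Filter.Frequently.of_forall fun N => ?_
    apply continuousOn_finset_sum
    intro i _
    exact ((hsm i).continuousOn).mono (polydisc_mono hRR.le c)
  | succ m IH =>
    intro E _ _ _ ι t c Rb R' b hRR hsm hb hbd
    have hcast : (((m+1 : ℕ) : ℕ∞) : WithTop ℕ∞) = ((m : ℕ∞) : WithTop ℕ∞) + 1 := by
      push_cast; rfl
    rw [hcast, contDiffOn_succ_iff_fderiv_of_isOpen (isOpen_polydisc R' c)]
    have hdiff : ∀ i, DifferentiableOn ℂ (t i) (polydisc Rb c) :=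
      fun i => (hsm i).differentiableOn (by simp)
    refine ⟨?_, ?_, ?_⟩
    · intro z hz
      exact (hasFDerivAt_tsum_polydisc hRR hdiff hb hbd hz).differentiableAt.differentiableWithinAt
    · intro h
      exact absurd h (by simp)
    · set Rm : ℝ := (R' + Rb) / 2 with hRm
      have h1 : R' < Rm := by rw [hRm]; linarith
      have h2 : Rm < Rb := by rw [hRm]; linarith
      have heq : ∀ z ∈ polydisc R' c,
          (∑' i, fderiv ℂ (t i) z) = fderiv ℂ (fun w => ∑' i, t i w) z :=
        fun z hz => ((hasFDerivAt_tsum_polydisc hRR hdiff hb hbd hz).fderiv).symm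
      have hsm' : ∀ i, ContDiffOn ℂ (((⊤:ℕ∞)) : WithTop ℕ∞) (fun z => fderiv ℂ (t i) z)
          (polydisc Rm c) :=
        fun i => ((hsm i).fderiv_of_isOpen (isOpen_polydisc Rb c) (by simp)).mono
          (polydisc_mono h2.le c)
      have hbd' : ∀ i, ∀ z ∈ polydisc Rm c, ‖fderiv ℂ (t i) z‖ ≤ b i / (Rb - Rm) :=
        fun i z hz => fderiv_opnorm_bound_polydisc h2 (hdiff i) (hbd i) hz
      exact ContDiffOn.congr (IH h1 hsm' (hb.div_const (Rb - Rm)) hbd')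
        (fun z hz => (heq z hz).symm)

lemma contDiffOn_top_tsum_polydisc {E : Type} [NormedAddCommGroup E] [NormedSpace ℂ E]
    [CompleteSpace E] {ι : Type} {t : ι → (Fin n → ℂ) → E} {c : Fin n → ℂ} {Rb R' : ℝ}
    {b : ι → ℝ} (hRR : R' < Rb)
    (hsm : ∀ i, ContDiffOn ℂ (((⊤:ℕ∞)) : WithTop ℕ∞) (t i) (polydisc Rb c))
    (hb : Summable b)
    (hbd : ∀ i, ∀ z ∈ polydisc Rb c, ‖t i z‖ ≤ b i) :
    ContDiffOn ℂ (((⊤:ℕ∞)) : WithTop ℕ∞) (fun w => ∑' i, t i w) (polydisc R' c) :=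
  contDiffOn_infty.2 fun m => contDiffOn_nat_tsum_polydisc m hRR hsm hb hbd


-- Section 11 : summability helpers
lemma tsum_supE_le_wnorm {G : Set (Fin n → ℝ)} {F : Coeffs n} {r s : ℝ} (hs : 0 ≤ s) :
    (∑' k, supE (Gext G r) (F k)) ≤ wnorm G F r s :=
  ENNReal.tsum_le_tsum fun k => by
    calc supE (Gext G r) (F k) = supE (Gext G r) (F k) * 1 := (mul_one _).symm
    _ ≤ supE (Gext G r) (F k) * ew k s := mul_le_mul' le_rfl (one_le_ew hs)

lemma znorm_mul_supE_ptwise {G : Set (Fin n → ℝ)} {F : Coeffs n} {r s : ℝ} (hs : 0 < s)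
    (k : Fin n → ℤ) : (znorm k : ℝ≥0∞) * supE (Gext G r) (F k) ≤
      ENNReal.ofReal (1 / (Real.exp 1 * s)) * (supE (Gext G r) (F k) * ew k s) := by
  have h1 : (znorm k : ℝ≥0∞) * 1 ≤ ENNReal.ofReal (1 / (Real.exp 1 * s)) * ew k s := by
    have := znorm_mul_ew_le (k := k) (s := 0) hs
    simpa [ew, mul_comm] using this
  calc (znorm k : ℝ≥0∞) * supE (Gext G r) (F k)
      ≤ (ENNReal.ofReal (1 / (Real.exp 1 * s)) * ew k s) * supE (Gext G r) (F k) := by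
        rw [← mul_one (znorm k : ℝ≥0∞)] at *
        exact mul_le_mul' (by simpa using h1) le_rfl
  _ = ENNReal.ofReal (1 / (Real.exp 1 * s)) * (supE (Gext G r) (F k) * ew k s) := by ring

lemma tsum_znorm_mul_supE_le {G : Set (Fin n → ℝ)} {F : Coeffs n} {r s : ℝ} (hs : 0 < s) :
    (∑' k, (znorm k : ℝ≥0∞) * supE (Gext G r) (F k)) ≤
      ENNReal.ofReal (1 / (Real.exp 1 * s)) * wnorm G F r s := by
  refine le_trans (ENNReal.tsum_le_tsum (znorm_mul_supE_ptwise hs)) ?_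
  rw [ENNReal.tsum_mul_left]
  exact mul_le_mul' le_rfl (le_of_eq (wnorm_eq G F r s).symm)

-- Section 12 : smoothness of the bracket coefficients
lemma pbC_contDiffOn {G : Set (Fin n → ℝ)} {ρ σ : ℝ} (hρ : 0 < ρ) (hσ : 0 < σ)
    {r rM rF rX : ℝ} (hr : 0 < r) (hrM : r < rM) (hMF : rM < rF) (hFX : rF ≤ rX)
    {F X : Coeffs n}
    (hFs : ∀ k, ContDiffOn ℂ (((⊤:ℕ∞)) : WithTop ℕ∞) (F k) (Gext G (rF * ρ)))
    (hXs : ∀ k, ContDiffOn ℂ (((⊤:ℕ∞)) : WithTop ℕ∞) (X k) (Gext G (rX * ρ)))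
    (hWF : wnorm G F (rF * ρ) (rF * σ) ≠ ⊤)
    (hWX : wnorm G X (rX * ρ) (rX * σ) ≠ ⊤) :
    ∀ k, ContDiffOn ℂ (((⊤:ℕ∞)) : WithTop ℕ∞) (pbC F X k) (Gext G (r * ρ)) := by
  have hrX : rM < rX := lt_of_lt_of_le hMF hFX
  have hρM : r * ρ < rM * ρ := by nlinarith
  have hρMF : rM * ρ < rF * ρ := by nlinarith
  have hρMX : rM * ρ < rX * ρ := by nlinarith
  have hρFX : rF * ρ ≤ rX * ρ := by nlinarith
  have hσF : (0:ℝ) < rF * σ := by nlinarith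
  have hσX : (0:ℝ) < rX * σ := by nlinarith
  have hdF : ∀ k, DifferentiableOn ℂ (F k) (Gext G (rF * ρ)) :=
    fun k => (hFs k).differentiableOn (by simp)
  have hdX : ∀ k, DifferentiableOn ℂ (X k) (Gext G (rX * ρ)) :=
    fun k => (hXs k).differentiableOn (by simp)
  intro k
  set aF : (Fin n → ℤ) → ℝ≥0∞ := fun k => supE (Gext G (rF * ρ)) (F k) with haF
  set xX : (Fin n → ℤ) → ℝ≥0∞ := fun k => supE (Gext G (rX * ρ)) (X k) with hxX
  set κ₁ : ℝ≥0∞ := ENNReal.ofReal (1 / (rF * ρ - rM * ρ)) with hκ₁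
  set κ₂ : ℝ≥0∞ := ENNReal.ofReal (1 / (rX * ρ - rM * ρ)) with hκ₂
  set WFn : ℝ≥0∞ := wnorm G F (rF * ρ) (rF * σ) with hWFn
  set WXn : ℝ≥0∞ := wnorm G X (rX * ρ) (rX * σ) with hWXn
  set Bnd : (Fin n → ℤ) → ℝ≥0∞ := fun k₁ =>
    ((znorm (k - k₁) : ℝ≥0∞) * κ₁ + (znorm k₁ : ℝ≥0∞) * κ₂) * (aF k₁ * xX (k - k₁)) with hBnd
  have hBndsum : (∑' k₁, Bnd k₁) ≠ ⊤ := by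
    have hstep : ∀ k₁, Bnd k₁ ≤
        κ₁ * (ENNReal.ofReal (1 / (Real.exp 1 * (rX * σ))) * WXn) * aF k₁
          + κ₂ * WXn * ((znorm k₁ : ℝ≥0∞) * aF k₁) := by
      intro k₁
      have h1 : (znorm (k - k₁) : ℝ≥0∞) * xX (k - k₁) ≤
          ENNReal.ofReal (1 / (Real.exp 1 * (rX * σ))) * WXn :=
        znorm_mul_supE_le_wnorm hσX (k - k₁)
      have h2 : xX (k - k₁) ≤ WXn := supE_le_wnorm hσX.le (k - k₁)
      calc Bnd k₁ = κ₁ * ((znorm (k - k₁) : ℝ≥0∞) * xX (k - k₁)) * aF k₁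
          + κ₂ * xX (k - k₁) * ((znorm k₁ : ℝ≥0∞) * aF k₁) := by rw [hBnd]; ring
      _ ≤ κ₁ * (ENNReal.ofReal (1 / (Real.exp 1 * (rX * σ))) * WXn) * aF k₁
          + κ₂ * WXn * ((znorm k₁ : ℝ≥0∞) * aF k₁) :=
        add_le_add (mul_le_mul' (mul_le_mul' le_rfl h1) le_rfl)
          (mul_le_mul' (mul_le_mul' le_rfl h2) le_rfl)
    have h2 : (∑' k₁, Bnd k₁) ≤
        κ₁ * (ENNReal.ofReal (1 / (Real.exp 1 * (rX * σ))) * WXn) * WFn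
          + κ₂ * WXn * (ENNReal.ofReal (1 / (Real.exp 1 * (rF * σ))) * WFn) := by
      refine le_trans (ENNReal.tsum_le_tsum hstep) ?_
      rw [ENNReal.tsum_add, ENNReal.tsum_mul_left, ENNReal.tsum_mul_left]
      exact add_le_add (mul_le_mul' le_rfl (tsum_supE_le_wnorm hσF.le))
        (mul_le_mul' le_rfl (tsum_znorm_mul_supE_le hσF))
    refine ne_top_of_le_ne_top ?_ h2
    apply ENNReal.add_ne_top.2
    constructor
    · exact ENNReal.mul_ne_top (ENNReal.mul_ne_top ENNReal.ofReal_ne_top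
        (ENNReal.mul_ne_top ENNReal.ofReal_ne_top hWX)) hWF
    · exact ENNReal.mul_ne_top (ENNReal.mul_ne_top ENNReal.ofReal_ne_top hWX)
        (ENNReal.mul_ne_top ENNReal.ofReal_ne_top hWF)
  apply contDiffOn_of_locally_contDiffOn
  intro z hz
  obtain ⟨p, hp, hzp⟩ : ∃ p ∈ G, z ∈ polydisc (r * ρ) (fun j => (p j : ℂ)) := by
    simpa [Gext, Set.mem_iUnion] using hz
  refine ⟨polydisc (r * ρ) (fun j => (p j : ℂ)), isOpen_polydisc _ _, hzp, ?_⟩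
  apply ContDiffOn.mono _ Set.inter_subset_right
  have hsub1 : polydisc (rM * ρ) (fun j => (p j : ℂ)) ⊆ Gext G (rM * ρ) :=
    polydisc_subset_Gext hp _
  have hSF : polydisc (rM * ρ) (fun j => (p j : ℂ)) ⊆ Gext G (rF * ρ) :=
    hsub1.trans (Gext_mono G hρMF.le)
  have hSX : polydisc (rM * ρ) (fun j => (p j : ℂ)) ⊆ Gext G (rX * ρ) :=
    hSF.trans (Gext_mono G hρFX)
  have hterm_smooth : ∀ k₁, ContDiffOn ℂ (((⊤:ℕ∞)) : WithTop ℕ∞)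
      (fun w => ∑ j, (pder j (F k₁) w * (Complex.I * ((k j - k₁ j : ℤ) : ℂ)) * X (k - k₁) w
        - Complex.I * ((k₁ j : ℤ) : ℂ) * F k₁ w * pder j (X (k - k₁)) w))
      (polydisc (rM * ρ) (fun j => (p j : ℂ))) := by
    intro k₁
    have hpF : ∀ j, ContDiffOn ℂ (((⊤:ℕ∞)) : WithTop ℕ∞) (pder j (F k₁))
        (Gext G (rF * ρ)) := by
      intro j
      exact ((hFs k₁).fderiv_of_isOpen (isOpen_Gext G (rF * ρ)) (by simp)).clm_apply
        contDiffOn_const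
    have hpX : ∀ j, ContDiffOn ℂ (((⊤:ℕ∞)) : WithTop ℕ∞) (pder j (X (k - k₁)))
        (Gext G (rX * ρ)) := by
      intro j
      exact ((hXs (k - k₁)).fderiv_of_isOpen (isOpen_Gext G (rX * ρ)) (by simp)).clm_apply
        contDiffOn_const
    apply ContDiffOn.sum
    intro j _
    apply ContDiffOn.sub
    · exact (((hpF j).mono hSF).mul contDiffOn_const).mul ((hXs (k - k₁)).mono hSX)
    · exact ((contDiffOn_const.mul ((hFs k₁).mono hSF)).mul ((hpX j).mono hSX))
  have hbd : ∀ k₁, ∀ w ∈ polydisc (rM * ρ) (fun j => (p j : ℂ)),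
      ‖∑ j, (pder j (F k₁) w * (Complex.I * ((k j - k₁ j : ℤ) : ℂ)) * X (k - k₁) w
        - Complex.I * ((k₁ j : ℤ) : ℂ) * F k₁ w * pder j (X (k - k₁)) w)‖ ≤ (Bnd k₁).toReal := by
    intro k₁ w hw
    have henn := pbC_term_enorm_bound (r := rM) hρMF hρMX hdF hdX k k₁ (hsub1 hw)
    have hBne : Bnd k₁ ≠ ⊤ := by
      rw [hBnd]
      apply ENNReal.mul_ne_top
      · exact ENNReal.add_ne_top.2 ⟨ENNReal.mul_ne_top (ENNReal.natCast_ne_top _)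
          ENNReal.ofReal_ne_top, ENNReal.mul_ne_top (ENNReal.natCast_ne_top _)
          ENNReal.ofReal_ne_top⟩
      · exact ENNReal.mul_ne_top (ne_top_of_le_ne_top hWF (supE_le_wnorm hσF.le k₁))
          (ne_top_of_le_ne_top hWX (supE_le_wnorm hσX.le (k - k₁)))
    have heq : ‖∑ j, (pder j (F k₁) w * (Complex.I * ((k j - k₁ j : ℤ) : ℂ)) * X (k - k₁) w
        - Complex.I * ((k₁ j : ℤ) : ℂ) * F k₁ w * pder j (X (k - k₁)) w)‖
        = ((‖∑ j, (pder j (F k₁) w * (Complex.I * ((k j - k₁ j : ℤ) : ℂ)) * X (k - k₁) w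
        - Complex.I * ((k₁ j : ℤ) : ℂ) * F k₁ w * pder j (X (k - k₁)) w)‖₊ : ℝ≥0∞)).toReal := by
      simp
    rw [heq]
    exact ENNReal.toReal_mono hBne henn
  exact contDiffOn_top_tsum_polydisc hρM hterm_smooth (ENNReal.summable_toReal hBndsum) hbd


-- Section 13 : the combinatorial sequence
noncomputable def Ec : ℕ → ℝ
  | 0 => 1
  | (i+1) => Ec i * (if i = 0 then 1 else (2*(i:ℝ)+1) * ((2*(i:ℝ)+1)/(2*(i:ℝ)))^(2*i))

lemma Ec_nonneg : ∀ i, 0 ≤ Ec i := by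
  intro i
  induction i with
  | zero => norm_num [Ec]
  | succ m IH =>
    rw [Ec]
    apply mul_nonneg IH
    split_ifs
    · norm_num
    · apply mul_nonneg (by positivity)
      apply pow_nonneg
      apply div_nonneg (by positivity) (by positivity)

lemma Ec_le_factorial : ∀ j, 1 ≤ j → Ec j ≤ (j.factorial : ℝ) * Real.exp 1 ^ (2*j) / Real.exp 1 ^ 2 := by
  intro j hj
  induction j with
  | zero => omega
  | succ m IHm =>
    by_cases hm : m = 0
    · subst hm
      have hE1 : Ec 1 = 1 := by simp [Ec]
      rw [hE1, Nat.factorial_one, Nat.cast_one, one_mul]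
      have h21 : Real.exp 1 ^ (2*1) = Real.exp 1 ^ 2 := by norm_num
      rw [h21, div_self (by positivity : (Real.exp 1 ^ 2) ≠ 0)]
    · have h1m : 1 ≤ m := Nat.one_le_iff_ne_zero.2 hm
      have IH := IHm h1m
      have hm0 : (1:ℝ) ≤ (m:ℝ) := by exact_mod_cast h1m
      have hexp : ((2*(m:ℝ)+1)/(2*(m:ℝ)))^(2*m) ≤ Real.exp 1 := by
        have hq : (2*(m:ℝ)+1)/(2*(m:ℝ)) = 1 + 1/(2*(m:ℝ)) := by field_simp
        rw [hq]
        have h1 : (1 + 1/(2*(m:ℝ)))^(2*m) ≤ Real.exp (1/(2*(m:ℝ)))^(2*m) := by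
          apply pow_le_pow_left₀ (by positivity)
          have := Real.add_one_le_exp (1/(2*(m:ℝ)))
          linarith
        refine le_trans h1 (le_of_eq ?_)
        rw [← Real.exp_nat_mul]
        congr 1
        push_cast
        field_simp
      have he2 : (2:ℝ) ≤ Real.exp 1 := by
        have := Real.add_one_le_exp 1; linarith
      have hC0 : (0:ℝ) ≤ (m.factorial:ℝ) * Real.exp 1^(2*m)/Real.exp 1^2 := by positivity
      calc Ec (m+1) = Ec m * ((2*(m:ℝ)+1) * ((2*(m:ℝ)+1)/(2*(m:ℝ)))^(2*m)) := by
            rw [Ec, if_neg hm]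
      _ ≤ ((m.factorial:ℝ) * Real.exp 1^(2*m)/Real.exp 1^2) * ((2*(m:ℝ)+1) * Real.exp 1) := by
            apply mul_le_mul IH
              (mul_le_mul_of_nonneg_left hexp (by positivity))
              (by positivity) hC0
      _ ≤ ((m+1).factorial : ℝ) * Real.exp 1^(2*(m+1))/Real.exp 1^2 := by
            rw [Nat.factorial_succ]
            have hkey : (2*(m:ℝ)+1) * Real.exp 1 ≤ ((m:ℝ)+1) * Real.exp 1^2 := by
              have h2 : (2*(m:ℝ)+1) ≤ ((m:ℝ)+1) * Real.exp 1 := by nlinarith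
              calc (2*(m:ℝ)+1) * Real.exp 1 ≤ (((m:ℝ)+1) * Real.exp 1) * Real.exp 1 :=
                mul_le_mul_of_nonneg_right h2 (Real.exp_nonneg 1)
              _ = ((m:ℝ)+1) * Real.exp 1^2 := by ring
            have hrw : ((m+1 : ℕ) * m.factorial : ℕ) = (m+1) * m.factorial := rfl
            push_cast
            have hpow : Real.exp 1^(2*(m+1)) = Real.exp 1^(2*m) * Real.exp 1^2 := by
              rw [← pow_add]; congr 1
            rw [hpow]
            have hC0' : (0:ℝ) ≤ (m.factorial:ℝ) * Real.exp 1^(2*m)/Real.exp 1^2 := hC0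
            calc (m.factorial:ℝ) * Real.exp 1^(2*m)/Real.exp 1^2 * ((2*(m:ℝ)+1) * Real.exp 1)
                ≤ (m.factorial:ℝ) * Real.exp 1^(2*m)/Real.exp 1^2 * (((m:ℝ)+1) * Real.exp 1^2) :=
                  mul_le_mul_of_nonneg_left hkey hC0'
            _ = ((m:ℝ)+1) * (m.factorial:ℝ) * (Real.exp 1^(2*m) * Real.exp 1^2)/Real.exp 1^2 := by
                  field_simp

-- Section 14 : the step identity
lemma step_eq {ρ σ u : ℝ} (hρ : 0 < ρ) (hσ : 0 < σ) (hu : 0 < u) (i : ℕ) :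
    (2 / (Real.exp 1 * ρ * σ * ((u - (if i = 0 then 0 else (2*(i:ℝ)/(2*(i:ℝ)+1)) * u)) * u)))
      * ((2 / (Real.exp 1 * ρ * σ))^i * Ec i /
          ((if i = 0 then 0 else (2*(i:ℝ)/(2*(i:ℝ)+1)) * u))^(2*i))
    = (2 / (Real.exp 1 * ρ * σ))^(i+1) * Ec (i+1) / u^(2*(i+1)) := by
  have hE : (0:ℝ) < Real.exp 1 := Real.exp_pos 1
  by_cases h0 : i = 0
  · subst h0
    simp only [if_pos rfl, pow_zero, Nat.mul_zero, Nat.zero_eq, mul_zero]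
    norm_num [Ec]
    field_simp
  · simp only [if_neg h0]
    have hi : (1:ℝ) ≤ (i:ℝ) := by exact_mod_cast Nat.one_le_iff_ne_zero.2 h0
    have h2i : (0:ℝ) < 2*(i:ℝ) := by linarith
    have h2i1 : (0:ℝ) < 2*(i:ℝ)+1 := by linarith
    have hEc : Ec (i+1) = Ec i * ((2*(i:ℝ)+1) * ((2*(i:ℝ)+1)/(2*(i:ℝ)))^(2*i)) := by
      rw [Ec, if_neg h0]
    have hv : u - (2*(i:ℝ)/(2*(i:ℝ)+1)) * u = u / (2*(i:ℝ)+1) := by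
      field_simp
      ring
    have hvp : ((2*(i:ℝ)/(2*(i:ℝ)+1)) * u)^(2*i) = (2*(i:ℝ))^(2*i)/(2*(i:ℝ)+1)^(2*i) * u^(2*i) := by
      rw [mul_pow, div_pow]
    have hqp : ((2*(i:ℝ)+1)/(2*(i:ℝ)))^(2*i) = (2*(i:ℝ)+1)^(2*i)/(2*(i:ℝ))^(2*i) := div_pow _ _ _
    rw [hEc, hv, hvp, hqp]
    have hu2 : u^(2*(i+1)) = u^(2*i) * u^2 := by rw [← pow_add]; congr 1
    rw [hu2, pow_succ]
    have hp1 : (0:ℝ) < (2*(i:ℝ))^(2*i) := by positivity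
    have hp2 : (0:ℝ) < (2*(i:ℝ)+1)^(2*i) := by positivity
    have hup : (0:ℝ) < u^(2*i) := by positivity
    field_simp




/-- Lemma 4.2: estimate for the iterated Lie derivative:
if `X` and `g` are analytic on `D_{1−d'}` with finite weighted Fourier norms, `d > 0`,
`d' ≥ 0`, `d + d' < 1`, then for every `j ≥ 1`
`(1/j!) ‖L_X^j g‖_{1−d−d'} ≤ (1/e²) (2e/(ρσ))^j d^{−2j} ‖X‖_{1−d'}^j ‖g‖_{1−d'}`,
where `L_X g = {g, X}`. -/
theorem statement5 {n : ℕ} (hn : 1 ≤ n) (G : Set (Fin n → ℝ)) (hG : IsOpen G)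
    (ρ σ : ℝ) (hρ : 0 < ρ) (hσ : 0 < σ)
    (d d' : ℝ) (hd0 : 0 < d) (hd'0 : 0 ≤ d') (hdd' : d + d' < 1)
    (X g : Coeffs n)
    (hXanal : ∀ k, AnalyticOn ℂ (X k) (Gext G ((1 - d') * ρ)))
    (hganal : ∀ k, AnalyticOn ℂ (g k) (Gext G ((1 - d') * ρ)))
    (hXfin : wnorm G X ((1 - d') * ρ) ((1 - d') * σ) ≠ ⊤)
    (hgfin : wnorm G g ((1 - d') * ρ) ((1 - d') * σ) ≠ ⊤)
    (j : ℕ) (hj : 1 ≤ j) :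
    ENNReal.ofReal (1 / (Nat.factorial j : ℝ))
        * wnorm G (lieIter X j g) ((1 - d - d') * ρ) ((1 - d - d') * σ)
      ≤ ENNReal.ofReal ((1 / Real.exp 1 ^ 2) * (2 * Real.exp 1 / (ρ * σ)) ^ j * (1 / d ^ (2 * j)))
        * (wnorm G X ((1 - d') * ρ) ((1 - d') * σ)) ^ j
        * wnorm G g ((1 - d') * ρ) ((1 - d') * σ) := by
  have hE : (0:ℝ) < Real.exp 1 := Real.exp_pos 1
  set A := wnorm G X ((1 - d') * ρ) ((1 - d') * σ) with hA
  set B := wnorm G g ((1 - d') * ρ) ((1 - d') * σ) with hB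
  have h1d : (0:ℝ) < 1 - d - d' := by linarith
  have h1d' : (0:ℝ) < 1 - d' := by linarith
  have hXsm : ∀ k, ContDiffOn ℂ (((⊤:ℕ∞)) : WithTop ℕ∞) (X k) (Gext G ((1 - d') * ρ)) := by
    intro k
    exact ((isOpen_Gext G ((1 - d') * ρ)).analyticOn_iff_analyticOnNhd.mp
      (hXanal k)).contDiffOn (isOpen_Gext G _).uniqueDiffOn
  have hgsm : ∀ k, ContDiffOn ℂ (((⊤:ℕ∞)) : WithTop ℕ∞) (g k) (Gext G ((1 - d') * ρ)) := by
    intro k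
    exact ((isOpen_Gext G ((1 - d') * ρ)).analyticOn_iff_analyticOnNhd.mp
      (hganal k)).contDiffOn (isOpen_Gext G _).uniqueDiffOn
  have hXdiff : ∀ k, DifferentiableOn ℂ (X k) (Gext G ((1 - d') * ρ)) :=
    fun k => (hXsm k).differentiableOn (by simp)
  have hAfin : A ≠ ⊤ := hXfin
  have hBfin : B ≠ ⊤ := hgfin
  have main : ∀ i : ℕ, ∀ u : ℝ, 0 < u → u ≤ d →
      (∀ k, ContDiffOn ℂ (((⊤:ℕ∞)) : WithTop ℕ∞) (lieIter X i g k) (Gext G ((1 - d' - u) * ρ)))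
      ∧ wnorm G (lieIter X i g) ((1 - d' - u) * ρ) ((1 - d' - u) * σ) ≤
          ENNReal.ofReal ((2 / (Real.exp 1 * ρ * σ))^i * Ec i / u^(2*i)) * A^i * B := by
    intro i
    induction i with
    | zero =>
      intro u hu hud
      have hle : (1 - d' - u) * ρ ≤ (1 - d') * ρ := by nlinarith
      have hles : (1 - d' - u) * σ ≤ (1 - d') * σ := by nlinarith
      have hg0 : lieIter X 0 g = g := by simp [lieIter]
      constructor
      · intro k
        rw [hg0]
        exact (hgsm k).mono (Gext_mono G hle)
      · rw [hg0]
        have h1 : wnorm G g ((1 - d' - u) * ρ) ((1 - d' - u) * σ) ≤ B := by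
          rw [hB]; exact wnorm_mono hle hles
        refine le_trans h1 (le_of_eq ?_)
        norm_num [Ec]
    | succ i IH =>
      intro u hu hud
      have hudd : (0:ℝ) < 1 - d' - u := by linarith
      set v : ℝ := if i = 0 then 0 else (2*(i:ℝ)/(2*(i:ℝ)+1)) * u with hv
      have hv0 : 0 ≤ v := by
        rw [hv]; split_ifs with h
        · exact le_rfl
        · exact mul_nonneg (div_nonneg (by positivity) (by positivity)) hu.le
      have hvu : v < u := by
        rw [hv]; split_ifs with h
        · exact hu
        · have hi : (1:ℝ) ≤ (i:ℝ) := by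
            exact_mod_cast Nat.one_le_iff_ne_zero.2 h
          have hfrac : 2*(i:ℝ)/(2*(i:ℝ)+1) < 1 := (div_lt_one (by linarith)).2 (by linarith)
          calc 2*(i:ℝ)/(2*(i:ℝ)+1) * u < 1 * u := mul_lt_mul_of_pos_right hfrac hu
          _ = u := one_mul u
      have hdata :
          (∀ k, DifferentiableOn ℂ (lieIter X i g k) (Gext G ((1 - d' - v) * ρ)))
          ∧ wnorm G (lieIter X i g) ((1 - d' - v) * ρ) ((1 - d' - v) * σ) ≤
              ENNReal.ofReal ((2 / (Real.exp 1 * ρ * σ))^i * Ec i / v^(2*i)) * A^i * B := by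
        by_cases h0 : i = 0
        · subst h0
          have hveq : v = 0 := by rw [hv]; simp
          have hg0 : lieIter X 0 g = g := by simp [lieIter]
          rw [hveq, hg0]
          constructor
          · intro k
            exact ((hgsm k).differentiableOn (by simp)).mono (Gext_mono G (by nlinarith))
          · have h1 : wnorm G g ((1 - d' - 0) * ρ) ((1 - d' - 0) * σ) ≤ B := by
              rw [hB]; exact wnorm_mono (by nlinarith) (by nlinarith)
            refine le_trans h1 (le_of_eq ?_)
            norm_num [Ec]
        · have hvpos : 0 < v := by
            rw [hv, if_neg h0]
            have hi : (1:ℝ) ≤ (i:ℝ) := by exact_mod_cast Nat.one_le_iff_ne_zero.2 h0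
            exact mul_pos (div_pos (by linarith) (by linarith)) hu
          have hIHv := IH v hvpos (le_trans hvu.le hud)
          exact ⟨fun k => (hIHv.1 k).differentiableOn (by simp), hIHv.2⟩
      obtain ⟨hFdiff, hFbd⟩ := hdata
      have hstep := pbC_wnorm_le (G := G) hρ hσ (r := 1 - d' - u) (rF := 1 - d' - v)
        (rX := 1 - d') hudd (by linarith [hvu]) (by linarith [hv0]) hFdiff hXdiff
      have hiter : lieIter X (i+1) g = pbC (lieIter X i g) X := by
        show (lieC X)^[i+1] g = _
        rw [Function.iterate_succ_apply']
        rfl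
      have hdata3 : (∀ k, ContDiffOn ℂ (((⊤:ℕ∞)) : WithTop ℕ∞) (lieIter X i g k)
            (Gext G ((1 - d' - u/3) * ρ)))
          ∧ wnorm G (lieIter X i g) ((1 - d' - u/3) * ρ) ((1 - d' - u/3) * σ) ≠ ⊤ := by
        by_cases h0 : i = 0
        · subst h0
          have hg0 : lieIter X 0 g = g := by simp [lieIter]
          rw [hg0]
          constructor
          · intro k
            exact (hgsm k).mono (Gext_mono G (by nlinarith))
          · refine ne_top_of_le_ne_top hBfin ?_
            rw [hB]; exact wnorm_mono (by nlinarith) (by nlinarith)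
        · have hIH3 := IH (u/3) (by linarith) (by linarith)
          refine ⟨hIH3.1, ne_top_of_le_ne_top ?_ hIH3.2⟩
          exact ENNReal.mul_ne_top (ENNReal.mul_ne_top ENNReal.ofReal_ne_top
            (ENNReal.pow_ne_top hAfin)) hBfin
      constructor
      · rw [hiter]
        exact pbC_contDiffOn hρ hσ (r := 1 - d' - u) (rM := 1 - d' - 2*u/3)
          (rF := 1 - d' - u/3) (rX := 1 - d') hudd (by linarith) (by linarith) (by linarith)
          hdata3.1 hXsm hdata3.2 hXfin
      · rw [← hA] at hstep
        have harg : ((1 - d' - v) - (1 - d' - u)) * ((1 - d') - (1 - d' - u)) = (u - v) * u := by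
          ring
        rw [harg] at hstep
        have hnn : (0:ℝ) ≤ 2 / (Real.exp 1 * ρ * σ * ((u - v) * u)) := by
          have hsp : (0:ℝ) < u - v := sub_pos.2 hvu
          positivity
        calc wnorm G (lieIter X (i+1) g) ((1 - d' - u) * ρ) ((1 - d' - u) * σ)
            = wnorm G (pbC (lieIter X i g) X) ((1 - d' - u) * ρ) ((1 - d' - u) * σ) := by
              rw [hiter]
        _ ≤ ENNReal.ofReal (2 / (Real.exp 1 * ρ * σ * ((u - v) * u)))
              * wnorm G (lieIter X i g) ((1 - d' - v) * ρ) ((1 - d' - v) * σ) * A := hstep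
        _ ≤ ENNReal.ofReal (2 / (Real.exp 1 * ρ * σ * ((u - v) * u)))
              * (ENNReal.ofReal ((2 / (Real.exp 1 * ρ * σ))^i * Ec i / v^(2*i)) * A^i * B) * A :=
            mul_le_mul' (mul_le_mul' le_rfl hFbd) le_rfl
        _ = ENNReal.ofReal ((2 / (Real.exp 1 * ρ * σ))^(i+1) * Ec (i+1) / u^(2*(i+1)))
              * A^(i+1) * B := by
            have hmm : ENNReal.ofReal (2 / (Real.exp 1 * ρ * σ * ((u - v) * u)))
                * ENNReal.ofReal ((2 / (Real.exp 1 * ρ * σ))^i * Ec i / v^(2*i))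
                = ENNReal.ofReal ((2 / (Real.exp 1 * ρ * σ))^(i+1) * Ec (i+1) / u^(2*(i+1))) := by
              rw [← ENNReal.ofReal_mul hnn]
              congr 1
              rw [hv]
              exact step_eq hρ hσ hu i
            calc ENNReal.ofReal (2 / (Real.exp 1 * ρ * σ * ((u - v) * u)))
                * (ENNReal.ofReal ((2 / (Real.exp 1 * ρ * σ))^i * Ec i / v^(2*i)) * A^i * B) * A
                = (ENNReal.ofReal (2 / (Real.exp 1 * ρ * σ * ((u - v) * u)))
                  * ENNReal.ofReal ((2 / (Real.exp 1 * ρ * σ))^i * Ec i / v^(2*i)))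
                  * (A^i * A) * B := by ring
            _ = ENNReal.ofReal ((2 / (Real.exp 1 * ρ * σ))^(i+1) * Ec (i+1) / u^(2*(i+1)))
                  * A^(i+1) * B := by rw [hmm, ← pow_succ]
  obtain ⟨-, hbd⟩ := main j d hd0 le_rfl
  have hrw1 : (1 - d - d' : ℝ) = 1 - d' - d := by ring
  rw [hrw1]
  calc ENNReal.ofReal (1/(j.factorial:ℝ))
        * wnorm G (lieIter X j g) ((1 - d' - d) * ρ) ((1 - d' - d) * σ)
      ≤ ENNReal.ofReal (1/(j.factorial:ℝ))
        * (ENNReal.ofReal ((2 / (Real.exp 1 * ρ * σ))^j * Ec j / d^(2*j)) * A^j * B) :=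
        mul_le_mul' le_rfl hbd
  _ = (ENNReal.ofReal (1/(j.factorial:ℝ))
        * ENNReal.ofReal ((2 / (Real.exp 1 * ρ * σ))^j * Ec j / d^(2*j))) * A^j * B := by ring
  _ ≤ ENNReal.ofReal ((1 / Real.exp 1 ^ 2) * (2 * Real.exp 1 / (ρ * σ)) ^ j * (1 / d ^ (2 * j)))
        * A^j * B := by
      refine mul_le_mul' (mul_le_mul' ?_ le_rfl) le_rfl
      rw [← ENNReal.ofReal_mul (by positivity)]
      apply ENNReal.ofReal_le_ofReal
      have hEc := Ec_le_factorial j hj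
      have hfac : (0:ℝ) < (j.factorial : ℝ) := by exact_mod_cast j.factorial_pos
      have h1 : (2 / (Real.exp 1 * ρ * σ))^j * Real.exp 1^(2*j) = (2 * Real.exp 1 / (ρ * σ))^j := by
        rw [pow_mul, ← mul_pow]
        congr 1
        field_simp
      calc (1/(j.factorial:ℝ)) * ((2 / (Real.exp 1 * ρ * σ))^j * Ec j / d^(2*j))
          ≤ (1/(j.factorial:ℝ)) * ((2 / (Real.exp 1 * ρ * σ))^j
              * ((j.factorial:ℝ) * Real.exp 1^(2*j)/Real.exp 1^2) / d^(2*j)) := by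
            gcongr
      _ = (1 / Real.exp 1 ^ 2) * (2 * Real.exp 1 / (ρ * σ)) ^ j * (1 / d ^ (2 * j)) := by
            rw [← h1]
            field_simp


end KAMStmt
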